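/- Let S be a doubly infinite sequence over a field with number wall W_{m,n}. If W_{m,n} = W_{m,n+1} = W_{m+1,n} = 0 for some m ≥ 0, then W_{m+1,n+1} = 0. (Zeros propagate to fill out square windows.) -/
import Mathlib

/-- The number wall of a doubly infinite sequence `s` over a field:
`W_{m,n} = det (s_{i-j+n})_{0 ≤ i,j ≤ m}` for `m ≥ 0`, with `W_{-1,n} = 1`
and `W_{m,n} = 0` for `m < -1`. -/
noncomputable def numberWall {K : Type*} [Field K] (s : ℤ → K) (m n : ℤ) : K :=
  if m < -1 then 0
  else if m = -1 then 1
  else Matrix.det (Matrix.of fun i j : Fin (m.toNat + 1) => s ((i : ℤ) - (j : ℤ) + n))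


/-- Zeros propagate to fill out square windows. -/
theorem numberWall_zero_propagates {K : Type*} [Field K] (s : ℤ → K)
    (m n : ℤ) (hm : 0 ≤ m)
    (h1 : numberWall s m n = 0)
    (h2 : numberWall s m (n + 1) = 0)
    (h3 : numberWall s (m + 1) n = 0) :
    numberWall s (m + 1) (n + 1) = 0 := by
  clear h1
  obtain ⟨M, hM⟩ : ∃ M : ℕ, m = (M : ℤ) := ⟨m.toNat, (Int.toNat_of_nonneg hm).symm⟩
  subst hM
  have e1 : ((M : ℤ)).toNat = M := by omega
  have e2 : ((M : ℤ) + 1).toNat = M + 1 := by omega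
  have hn2 : ¬ ((M : ℤ) < -1) := by omega
  have hn2' : (M : ℤ) ≠ -1 := by omega
  have hn3 : ¬ ((M : ℤ) + 1 < -1) := by omega
  have hn3' : (M : ℤ) + 1 ≠ -1 := by omega
  rw [numberWall, if_neg hn2, if_neg hn2', e1] at h2
  rw [numberWall, if_neg hn3, if_neg hn3', e2] at h3
  rw [numberWall, if_neg hn3, if_neg hn3', e2]
  by_contra hgoal
  -- kernel vector from h2 : small matrix at column position n+1
  obtain ⟨b, hb0, hb⟩ := Matrix.exists_mulVec_eq_zero_iff.2 h2
  obtain ⟨d, hd0, hd⟩ := Matrix.exists_mulVec_eq_zero_iff.2 h3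
  have hb' : ∀ i : Fin (M + 1), ∑ j : Fin (M + 1),
      s ((i : ℤ) - (j : ℤ) + (n + 1)) * b j = 0 := by
    intro i
    have := congrFun hb i
    simpa [Matrix.mulVec, dotProduct] using this
  have hd' : ∀ i : Fin (M + 1 + 1), ∑ j : Fin (M + 1 + 1),
      s ((i : ℤ) - (j : ℤ) + n) * d j = 0 := by
    intro i
    have := congrFun hd i
    simpa [Matrix.mulVec, dotProduct] using this
  -- the "R" operator: combination of length-(M+2) windows at position n+1
  set R : (Fin (M + 1 + 1) → K) → Fin (M + 1 + 1) → K :=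
    fun g i => ∑ j : Fin (M + 1 + 1), s ((i : ℤ) - (j : ℤ) + (n + 1)) * g j with hR
  have hind : ∀ g : Fin (M + 1 + 1) → K, (∀ i, R g i = 0) → g = 0 := by
    intro g hg
    by_contra hg0
    apply hgoal
    apply Matrix.exists_mulVec_eq_zero_iff.1
    refine ⟨g, hg0, ?_⟩
    funext i
    have := hg i
    simpa [Matrix.mulVec, dotProduct, hR] using this
  -- extend b by a zero at the end
  set Bv : Fin (M + 1 + 1) → K := Fin.snoc b 0 with hBv
  have hRb : ∀ i : Fin (M + 1 + 1), (i : ℕ) < M + 1 → R Bv i = 0 := by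
    intro i hi
    have key : R Bv i = ∑ j : Fin (M + 1),
        s ((i : ℤ) - (j : ℤ) + (n + 1)) * b j := by
      simp only [hR]
      conv_lhs => rw [Fin.sum_univ_castSucc]
      simp [hBv, Fin.snoc_castSucc, Fin.snoc_last]
    rw [key]
    have := hb' ⟨(i : ℕ), hi⟩
    simpa using this
  set cB : K := R Bv (Fin.last (M + 1)) with hcBdef
  have hdich : ∀ i : Fin (M + 1 + 1), (i : ℕ) < M + 1 ∨ i = Fin.last (M + 1) := by
    intro i
    rcases Nat.lt_or_ge (i : ℕ) (M + 1) with h | h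
    · exact Or.inl h
    · right
      apply Fin.ext
      have := i.isLt
      simp only [Fin.val_last]
      omega
  have hcB : cB ≠ 0 := by
    intro h0
    have hBv0 : Bv = 0 := by
      apply hind
      intro i
      rcases hdich i with h | h
      · exact hRb i h
      · rw [h, ← hcBdef, h0]
    apply hb0
    funext j
    have := congrFun hBv0 j.castSucc
    simpa [hBv, Fin.snoc_castSucc] using this
  -- shift: d also kills the first M+1 rows of the position-(n+1) system
  have hRd : ∀ i : Fin (M + 1 + 1), (i : ℕ) < M + 1 → R d i = 0 := by
    intro i hi
    set i' : Fin (M + 1 + 1) := ⟨(i : ℕ) + 1, by omega⟩ with hi'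
    have harg : ∀ j : Fin (M + 1 + 1),
        ((i' : ℤ) - (j : ℤ) + n) = ((i : ℤ) - (j : ℤ) + (n + 1)) := by
      intro j
      simp only [hi']
      push_cast
      ring
    have := hd' i'
    rw [hR]
    calc ∑ j : Fin (M + 1 + 1), s ((i : ℤ) - (j : ℤ) + (n + 1)) * d j
        = ∑ j : Fin (M + 1 + 1), s ((i' : ℤ) - (j : ℤ) + n) * d j :=
          Finset.sum_congr rfl (fun j _ => by rw [harg j])
      _ = 0 := this
  set cD : K := R d (Fin.last (M + 1)) with hcDdef
  -- the combination cB • d - cD • Bv is killed by R everywhere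
  have hcomb : (fun j => cB * d j - cD * Bv j) = 0 := by
    apply hind
    intro i
    have hlin : R (fun j => cB * d j - cD * Bv j) i = cB * R d i - cD * R Bv i := by
      simp only [hR, mul_sub, Finset.sum_sub_distrib, Finset.mul_sum]
      congr 1 <;> exact Finset.sum_congr rfl (fun j _ => by ring)
    rw [hlin]
    rcases hdich i with h | h
    · rw [hRd i h, hRb i h]; ring
    · rw [h, ← hcDdef, ← hcBdef]; ring
  -- hence d (last) = 0
  have hdlast : d (Fin.last (M + 1)) = 0 := by
    have := congrFun hcomb (Fin.last (M + 1))
    simp only [Pi.zero_apply, sub_eq_zero] at this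
    have hBvlast : Bv (Fin.last (M + 1)) = 0 := by simp [hBv]
    rw [hBvlast, mul_zero] at this
    exact (mul_eq_zero.mp this).resolve_left hcB
  -- shift d one step: it then lies in the kernel of the full (n+1) system
  set d' : Fin (M + 1 + 1) → K := Fin.cons 0 (fun j : Fin (M + 1) => d j.castSucc) with hd'def
  have hRd' : ∀ i, R d' i = 0 := by
    intro i
    have key : R d' i = ∑ j : Fin (M + 1),
        s ((i : ℤ) - (j : ℤ) + n) * d j.castSucc := by
      simp only [hR]
      conv_lhs => rw [Fin.sum_univ_succ]
      simp only [hd'def, Fin.cons_zero, Fin.cons_succ, mul_zero, zero_add]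
      apply Finset.sum_congr rfl
      intro j _
      congr 1
      have : ((j.succ : Fin (M + 1 + 1)) : ℤ) = (j : ℤ) + 1 := by
        simp [Fin.val_succ]
      rw [this]
      ring_nf
    rw [key]
    have := hd' i
    rw [Fin.sum_univ_castSucc] at this
    rw [hdlast, mul_zero, add_zero] at this
    calc ∑ j : Fin (M + 1), s ((i : ℤ) - (j : ℤ) + n) * d j.castSucc
        = ∑ j : Fin (M + 1), s ((i : ℤ) - (j.castSucc : ℤ) + n) * d j.castSucc := by
          apply Finset.sum_congr rfl
          intro j _
          congr 2
      _ = 0 := this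
  have hd'0 : d' = 0 := hind d' hRd'
  apply hd0
  funext k
  rcases hdich k with h | h
  · have := congrFun hd'0 (⟨(k : ℕ), h⟩ : Fin (M + 1)).succ
    simp only [hd'def, Fin.cons_succ, Pi.zero_apply] at this
    have hk : (⟨(k : ℕ), h⟩ : Fin (M + 1)).castSucc = k := by
      apply Fin.ext; simp
    rwa [hk] at this
  · rw [h]; exact hdlast
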